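/- Let f(x) = ∑_{n ≥ 0} x^{2^n − 1} ∈ ℤ[[x]] and let g(x) ∈ ℤ[1/2][[x]] be the unique power series with constant term 1 satisfying g(x)² = f(x)·f(−x). Then the power series δg(x,y) = g(x+y)/(g(x)·g(y)) has all coefficients in ℤ. -/

import Mathlib

open Finset MvPowerSeries

noncomputable section St12aux

abbrev QQ := MvPowerSeries (Fin 2) ℚ

/-- integers inside ℚ -/
abbrev SR : Subring ℚ := (Int.castRingHom ℚ).range

lemma mem_SR_iff {q : ℚ} : q ∈ SR ↔ ∃ n : ℤ, q = (n : ℚ) := by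
  constructor
  · rintro ⟨n, rfl⟩; exact ⟨n, rfl⟩
  · rintro ⟨n, rfl⟩; exact ⟨n, rfl⟩

/-- series with integer coefficients -/
def S : Subring QQ where
  carrier := {φ | ∀ d : Fin 2 →₀ ℕ, MvPowerSeries.coeff d φ ∈ SR}
  zero_mem' := by intro d; simp
  one_mem' := by
    intro d
    classical
    rw [MvPowerSeries.coeff_one]
    split <;> simp
  add_mem' := by intro a b ha hb d; rw [map_add]; exact add_mem (ha d) (hb d)
  neg_mem' := by intro a ha d; rw [map_neg]; exact neg_mem (ha d)
  mul_mem' := by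
    intro a b ha hb d
    classical
    rw [MvPowerSeries.coeff_mul]
    exact Subring.sum_mem _ fun p _ => mul_mem (ha p.1) (hb p.2)

lemma mem_S_iff {φ : QQ} : φ ∈ S ↔ ∀ d, ∃ n : ℤ, MvPowerSeries.coeff d φ = (n : ℚ) := by
  unfold S
  constructor
  · intro h d; exact mem_SR_iff.mp (h d)
  · intro h d; exact mem_SR_iff.mpr (h d)

lemma toMap {φ : QQ} (hφ : φ ∈ S) :
    ∃ ψ : MvPowerSeries (Fin 2) ℤ, MvPowerSeries.map (Int.castRingHom ℚ) ψ = φ := by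
  rw [mem_S_iff] at hφ
  refine ⟨fun d => Classical.choose (hφ d), ?_⟩
  ext d
  show (Int.castRingHom ℚ) (Classical.choose (hφ d)) = _
  exact ((Classical.choose_spec (hφ d)).symm : _)

/-- inverse of an integral series with constant coefficient 1 -/
lemma invS {φ : QQ} (hφ : φ ∈ S) (h1 : MvPowerSeries.constantCoeff φ = 1) :
    ∃ B ∈ S, φ * B = 1 := by
  obtain ⟨ψ, rfl⟩ := toMap hφ
  have h1' : MvPowerSeries.constantCoeff ψ = 1 := by
    have : ((MvPowerSeries.constantCoeff ψ : ℤ) : ℚ) = 1 := by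
      rw [← h1, MvPowerSeries.constantCoeff_map]; rfl
    exact_mod_cast this
  set B0 := MvPowerSeries.invOfUnit ψ 1 with hB0
  have hmul : ψ * B0 = 1 := MvPowerSeries.mul_invOfUnit ψ 1 (by simp [h1'])
  refine ⟨MvPowerSeries.map (Int.castRingHom ℚ) B0, ?_, ?_⟩
  · rw [mem_S_iff]
    intro d
    rw [MvPowerSeries.coeff_map]; exact ⟨MvPowerSeries.coeff d B0, rfl⟩
  · rw [← map_mul, hmul, map_one]



lemma finsupp_ne_zero_deg {a : Fin 2 →₀ ℕ} (h : a ≠ 0) : 1 ≤ a 0 + a 1 := by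
  by_contra hc
  push_neg at hc
  refine h ?_
  have h0 : a 0 = 0 := by omega
  have h1 : a 1 = 0 := by omega
  ext i
  match i with
  | 0 => simpa using h0
  | 1 => simpa using h1

/-- integrality of sqrt(1+4τ) -/
lemma sqrtS {τ σ : QQ} (hτ : τ ∈ S) (hσ : σ ^ 2 = 1 + 4 * τ)
    (hσ0 : MvPowerSeries.constantCoeff σ = 1) : σ ∈ S := by
  classical
  set u : QQ := (2⁻¹ : ℚ) • (σ - 1) with hu
  have hσu : σ = 1 + 2 * u := by
    have h2 : (2 : QQ) = algebraMap ℚ QQ 2 := (map_ofNat _ 2).symm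
    rw [hu, Algebra.smul_def, h2, ← mul_assoc, ← map_mul]
    norm_num
  have hu0 : MvPowerSeries.constantCoeff u = 0 := by
    have h := congrArg (MvPowerSeries.constantCoeff) hσu
    rw [hσ0, map_add, map_mul, map_one] at h
    have h2' : (MvPowerSeries.constantCoeff) (2 : QQ) = (2:ℚ) :=
      map_ofNat _ 2
    rw [h2'] at h
    linarith
  have key : u = τ - u * u := by
    have hσ' : (1 + 2*u)^2 = 1 + 4 * τ := by rw [← hσu]; exact hσ
    have h4 : (4:ℚ) • (u + u * u) = (4:ℚ) • τ := by
      rw [Algebra.smul_def, Algebra.smul_def]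
      have h4c : algebraMap ℚ QQ 4 = (4 : QQ) := map_ofNat _ 4
      rw [h4c]
      linear_combination hσ'
    have hinj := smul_right_injective QQ (by norm_num : (4:ℚ) ≠ 0) h4
    linear_combination hinj
  have hcu : ∀ N : ℕ, ∀ d : Fin 2 →₀ ℕ, d 0 + d 1 = N → MvPowerSeries.coeff d u ∈ SR := by
    intro N
    induction N using Nat.strong_induction_on with
    | _ N ih =>
      intro d hd
      have hstep : MvPowerSeries.coeff d u
          = MvPowerSeries.coeff d τ - MvPowerSeries.coeff d (u * u) := by
        conv_lhs => rw [key]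
        rw [map_sub]
      rw [hstep, MvPowerSeries.coeff_mul]
      refine sub_mem (hτ d) ?_
      refine Subring.sum_mem _ fun p hp => ?_
      rw [Finset.HasAntidiagonal.mem_antidiagonal] at hp
      by_cases h1 : p.1 = 0
      · rw [h1]
        have h0 : MvPowerSeries.coeff (0 : Fin 2 →₀ ℕ) u = 0 := hu0
        rw [h0, zero_mul]
        exact zero_mem _
      by_cases h2' : p.2 = 0
      · rw [h2']
        have h0 : MvPowerSeries.coeff (0 : Fin 2 →₀ ℕ) u = 0 := hu0
        rw [h0, mul_zero]
        exact zero_mem _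
      have hadd : ∀ i, p.1 i + p.2 i = d i := by
        intro i; rw [← hp]; simp
      have e1 := finsupp_ne_zero_deg h1
      have e2 := finsupp_ne_zero_deg h2'
      have l1 : p.1 0 + p.1 1 < N := by have := hadd 0; have := hadd 1; omega
      have l2 : p.2 0 + p.2 1 < N := by have := hadd 0; have := hadd 1; omega
      exact mul_mem (ih _ l1 p.1 rfl) (ih _ l2 p.2 rfl)
  have huS : u ∈ S := fun d => hcu (d 0 + d 1) d rfl
  have h2S : (2 : QQ) ∈ S := by
    have h : (2:QQ) = 1 + 1 := by norm_num
    rw [h]; exact add_mem (one_mem S) (one_mem S)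
  rw [hσu]
  exact add_mem (one_mem S) (mul_mem h2S huS)


open scoped Classical in
/-- integer coefficient function of `f` -/
def cz (m : ℕ) : ℤ := if ∃ n : ℕ, m + 1 = 2 ^ n then 1 else 0

noncomputable def fSeriesQ' : PowerSeries ℚ := by
  classical
  exact PowerSeries.mk fun m => if ∃ n : ℕ, m + 1 = 2 ^ n then 1 else 0

lemma coeff_fQ (m : ℕ) : PowerSeries.coeff m fSeriesQ' = (cz m : ℚ) := by
  unfold fSeriesQ' cz
  rw [PowerSeries.coeff_mk]
  by_cases h : ∃ n : ℕ, m + 1 = 2 ^ n <;> simp [h]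

lemma cz0 : cz 0 = 1 := by
  unfold cz
  rw [if_pos ⟨0, rfl⟩]

lemma cz_even {m : ℕ} (hm : m % 2 = 0) (h0 : m ≠ 0) : cz m = 0 := by
  unfold cz
  rw [if_neg]
  rintro ⟨n, hn⟩
  match n with
  | 0 => simp at hn; omega
  | (k+1) => rw [pow_succ] at hn; omega

lemma cz_succ_even {e : ℕ} : cz (e + e + 1) = cz e := by
  unfold cz
  by_cases h : ∃ n : ℕ, e + 1 = 2 ^ n
  · rw [if_pos h, if_pos]
    obtain ⟨n, hn⟩ := h
    exact ⟨n + 1, by rw [pow_succ]; omega⟩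
  · rw [if_neg h, if_neg]
    rintro ⟨n, hn⟩
    match n with
    | 0 => simp at hn
    | (k+1) =>
      rw [pow_succ] at hn
      exact h ⟨k, by omega⟩

lemma zmod_two_add_self (x : ZMod 2) : x + x = 0 := by
  have : (2 : ZMod 2) = 0 := by decide
  rw [← two_mul, this, zero_mul]

/-- parity of the convolution square -/
lemma conv_sq_zmod (c : ℕ → ℤ) (n : ℕ) :
    ((∑ p ∈ Finset.HasAntidiagonal.antidiagonal n, c p.1 * c p.2 : ℤ) : ZMod 2)
      = if n % 2 = 0 then ((c (n / 2) : ZMod 2)) ^ 2 else 0 := by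
  push_cast
  set F : ℕ × ℕ → ZMod 2 := fun p => (c p.1 : ZMod 2) * (c p.2 : ZMod 2) with hF
  have hswap : ∀ p : ℕ × ℕ, F p + F (Prod.swap p) = 0 := by
    intro p
    have : F (Prod.swap p) = F p := by simp [hF, mul_comm]
    rw [this]
    exact zmod_two_add_self _
  by_cases hn : n % 2 = 0
  · rw [if_pos hn]
    set e := n / 2 with he
    have hee : e + e = n := by omega
    have hmem : ((e, e) : ℕ × ℕ) ∈ Finset.HasAntidiagonal.antidiagonal n := by
      rw [Finset.HasAntidiagonal.mem_antidiagonal]; exact hee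
    rw [← Finset.add_sum_erase _ F hmem]
    have hrest : ∑ p ∈ (Finset.HasAntidiagonal.antidiagonal n).erase (e, e), F p = 0 := by
      refine Finset.sum_involution (fun p _ => Prod.swap p) (fun p _ => hswap p)
        (fun p hp hFp => ?_) (fun p hp => ?_) (fun p hp => Prod.swap_swap p)
      · intro hc
        have h1 : p.1 = p.2 := by
          have := congrArg Prod.fst hc
          simpa using this.symm
        have hp2 := Finset.mem_of_mem_erase hp
        rw [Finset.HasAntidiagonal.mem_antidiagonal] at hp2
        have : p = (e, e) := by
          have : p.1 = e := by omega
          have h2 : p.2 = e := by omega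
          exact Prod.ext ‹p.1 = e› h2
        exact (Finset.ne_of_mem_erase hp) this
      · have hp' := Finset.mem_of_mem_erase hp
        rw [Finset.HasAntidiagonal.mem_antidiagonal] at hp'
        refine Finset.mem_erase.mpr ⟨?_, Finset.HasAntidiagonal.mem_antidiagonal.mpr ?_⟩
        · intro hc
          apply Finset.ne_of_mem_erase hp
          have h1 : p.1 = e := by
            have := congrArg Prod.snd hc; simpa using this
          have h2 : p.2 = e := by
            have := congrArg Prod.fst hc; simpa using this
          exact Prod.ext h1 h2
        · show p.swap.1 + p.swap.2 = n
          simp only [Prod.fst_swap, Prod.snd_swap]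
          omega
    rw [hrest, add_zero]
    simp [hF, sq]
  · rw [if_neg hn]
    refine Finset.sum_involution (fun p _ => Prod.swap p) (fun p _ => hswap p)
      (fun p hp hFp => ?_) (fun p hp => ?_) (fun p hp => Prod.swap_swap p)
    · intro hc
      have h1 : p.1 = p.2 := by
        have := congrArg Prod.fst hc
        simpa using this.symm
      rw [Finset.HasAntidiagonal.mem_antidiagonal] at hp
      omega
    · rw [Finset.HasAntidiagonal.mem_antidiagonal] at hp
      refine Finset.HasAntidiagonal.mem_antidiagonal.mpr ?_
      show p.swap.1 + p.swap.2 = n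
      simp only [Prod.fst_swap, Prod.snd_swap]
      omega

/-- divide an even series by 2, 1-variable version -/
lemma half1 {p : PowerSeries ℚ} (h : ∀ m, ∃ k : ℤ, PowerSeries.coeff m p = 2 * (k : ℚ)) :
    ∃ u : PowerSeries ℚ, (∀ m, PowerSeries.coeff m u ∈ SR) ∧ p = 2 * u := by
  refine ⟨(2⁻¹ : ℚ) • p, fun m => ?_, ?_⟩
  · obtain ⟨k, hk⟩ := h m
    rw [PowerSeries.coeff_smul, hk]
    refine ⟨k, ?_⟩
    have : (Int.castRingHom ℚ) k = (k : ℚ) := rfl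
    rw [this, smul_eq_mul]
    ring
  · have h2 : (2 : PowerSeries ℚ) = algebraMap ℚ (PowerSeries ℚ) 2 := (map_ofNat _ 2).symm
    rw [Algebra.smul_def, h2, ← mul_assoc, ← map_mul]
    norm_num

/-- the key one-variable congruence `f·(1+X·f) ≡ 1 mod 2` -/
lemma hOne : ∃ u₁ : PowerSeries ℚ, (∀ m, PowerSeries.coeff m u₁ ∈ SR) ∧
    fSeriesQ' * (1 + PowerSeries.X * fSeriesQ') = 1 + 2 * u₁ := by
  have hcl : ∀ m, ∃ k : ℤ, PowerSeries.coeff m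
      (fSeriesQ' * (1 + PowerSeries.X * fSeriesQ') - 1) = 2 * (k : ℚ) := by
    intro m
    have hexp : fSeriesQ' * (1 + PowerSeries.X * fSeriesQ') - 1
        = (fSeriesQ' - 1) + PowerSeries.X * (fSeriesQ' * fSeriesQ') := by ring
    rw [hexp, map_add, map_sub]
    match m with
    | 0 =>
      rw [PowerSeries.coeff_zero_X_mul, coeff_fQ, cz0, PowerSeries.coeff_one]
      exact ⟨0, by norm_num⟩
    | (n+1) =>
      rw [PowerSeries.coeff_succ_X_mul, PowerSeries.coeff_one, if_neg (Nat.succ_ne_zero n),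
        coeff_fQ, PowerSeries.coeff_mul]
      have hsum : ∀ p : ℕ × ℕ, PowerSeries.coeff p.1 fSeriesQ' * PowerSeries.coeff p.2 fSeriesQ'
          = ((cz p.1 * cz p.2 : ℤ) : ℚ) := by
        intro p; rw [coeff_fQ, coeff_fQ]; push_cast; ring
      rw [Finset.sum_congr rfl (fun p _ => hsum p)]
      rw [← Int.cast_sum ]
      set z : ℤ := cz (n+1) + ∑ p ∈ Finset.HasAntidiagonal.antidiagonal n, cz p.1 * cz p.2 with hz
      have hcast : (cz (n+1) : ℚ) - 0 + ((∑ p ∈ Finset.HasAntidiagonal.antidiagonal n, cz p.1 * cz p.2 : ℤ) : ℚ)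
          = (z : ℚ) := by rw [hz]; push_cast; ring
      rw [hcast]
      have hzz : (z : ZMod 2) = 0 := by
        rw [hz]
        push_cast [conv_sq_zmod cz n]
        by_cases hn : n % 2 = 0
        · rw [if_pos hn]
          have he : n / 2 + n / 2 = n := by omega
          have h1 : cz (n + 1) = cz (n / 2) := by
            have := cz_succ_even (e := n / 2)
            rw [he] at this
            exact this
          rw [h1]
          have hx : ((cz (n/2) : ZMod 2)) ^ 2 = (cz (n/2) : ZMod 2) := ZMod.pow_card _
          rw [hx]
          exact zmod_two_add_self _
        · rw [if_neg hn]
          have h1 : cz (n + 1) = 0 := cz_even (by omega) (by omega)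
          rw [h1]
          norm_num
      obtain ⟨k, hk⟩ := (ZMod.intCast_zmod_eq_zero_iff_dvd z 2).mp hzz
      exact ⟨k, by rw [hk]; push_cast; ring⟩

  obtain ⟨u, hu, he⟩ := half1 hcl
  exact ⟨u, hu, by linear_combination he⟩


/-! ### embeddings of one-variable series into two variables -/

def fs (i k : ℕ) : Fin 2 →₀ ℕ := Finsupp.single 0 i + Finsupp.single 1 k

lemma fs_apply0 (i k : ℕ) : fs i k 0 = i := by
  simp [fs, Finsupp.single_apply]

lemma fs_apply1 (i k : ℕ) : fs i k 1 = k := by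
  simp [fs, Finsupp.single_apply]

lemma fs_eta (d : Fin 2 →₀ ℕ) : fs (d 0) (d 1) = d := by
  ext i
  match i with
  | 0 => rw [fs_apply0]
  | 1 => rw [fs_apply1]

/-- reindexing the `Finsupp` antidiagonal as a product of two `ℕ` antidiagonals -/
lemma sum_AD (d : Fin 2 →₀ ℕ) (f : (Fin 2 →₀ ℕ) × (Fin 2 →₀ ℕ) → ℚ) :
    ∑ p ∈ Finset.HasAntidiagonal.antidiagonal d, f p
      = ∑ q ∈ Finset.HasAntidiagonal.antidiagonal (d 0) ×ˢ Finset.HasAntidiagonal.antidiagonal (d 1),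
          f (fs q.1.1 q.2.1, fs q.1.2 q.2.2) := by
  refine Finset.sum_nbij' (i := fun p => ((p.1 0, p.2 0), (p.1 1, p.2 1)))
    (j := fun q => (fs q.1.1 q.2.1, fs q.1.2 q.2.2)) ?_ ?_ ?_ ?_ ?_
  · intro p hp
    rw [Finset.HasAntidiagonal.mem_antidiagonal] at hp
    rw [Finset.mem_product, Finset.HasAntidiagonal.mem_antidiagonal, Finset.HasAntidiagonal.mem_antidiagonal]
    constructor
    · have := congrArg (fun z : Fin 2 →₀ ℕ => z 0) hp
      simpa using this
    · have := congrArg (fun z : Fin 2 →₀ ℕ => z 1) hp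
      simpa using this
  · intro q hq
    rw [Finset.mem_product, Finset.HasAntidiagonal.mem_antidiagonal, Finset.HasAntidiagonal.mem_antidiagonal] at hq
    rw [Finset.HasAntidiagonal.mem_antidiagonal]
    ext i
    match i with
    | 0 => simp only [Finsupp.add_apply, fs_apply0]; exact hq.1
    | 1 => simp only [Finsupp.add_apply, fs_apply1]; exact hq.2
  · intro p _
    exact Prod.ext (fs_eta p.1) (fs_eta p.2)
  · intro q _
    refine Prod.ext (Prod.ext ?_ ?_) (Prod.ext ?_ ?_) <;>
      simp [fs_apply0, fs_apply1]
  · intro p _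
    rw [fs_eta, fs_eta]

def emb0 (p : PowerSeries ℚ) : QQ :=
  fun d => if d 1 = 0 then PowerSeries.coeff (d 0) p else 0

lemma coeff_emb0 (p : PowerSeries ℚ) (d : Fin 2 →₀ ℕ) :
    MvPowerSeries.coeff d (emb0 p) = if d 1 = 0 then PowerSeries.coeff (d 0) p else 0 := rfl

def emb1 (p : PowerSeries ℚ) : QQ :=
  fun d => if d 0 = 0 then PowerSeries.coeff (d 1) p else 0

lemma coeff_emb1 (p : PowerSeries ℚ) (d : Fin 2 →₀ ℕ) :
    MvPowerSeries.coeff d (emb1 p) = if d 0 = 0 then PowerSeries.coeff (d 1) p else 0 := rfl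

def embS (p : PowerSeries ℚ) : QQ :=
  fun d => ((d 0 + d 1).choose (d 0) : ℚ) * PowerSeries.coeff (d 0 + d 1) p

lemma coeff_embS (p : PowerSeries ℚ) (d : Fin 2 →₀ ℕ) :
    MvPowerSeries.coeff d (embS p)
      = ((d 0 + d 1).choose (d 0) : ℚ) * PowerSeries.coeff (d 0 + d 1) p := rfl

lemma emb0_add (p q : PowerSeries ℚ) : emb0 (p + q) = emb0 p + emb0 q := by
  ext d
  rw [map_add, coeff_emb0, coeff_emb0, coeff_emb0, map_add]
  split <;> simp

lemma emb1_add (p q : PowerSeries ℚ) : emb1 (p + q) = emb1 p + emb1 q := by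
  ext d
  rw [map_add, coeff_emb1, coeff_emb1, coeff_emb1, map_add]
  split <;> simp

lemma embS_add (p q : PowerSeries ℚ) : embS (p + q) = embS p + embS q := by
  ext d
  rw [map_add, coeff_embS, coeff_embS, coeff_embS, map_add]
  ring

lemma emb0_neg (p : PowerSeries ℚ) : emb0 (-p) = -emb0 p := by
  ext d
  rw [map_neg, coeff_emb0, coeff_emb0, map_neg]
  split <;> simp

lemma emb1_neg (p : PowerSeries ℚ) : emb1 (-p) = -emb1 p := by
  ext d
  rw [map_neg, coeff_emb1, coeff_emb1, map_neg]
  split <;> simp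

lemma embS_neg (p : PowerSeries ℚ) : embS (-p) = -embS p := by
  ext d
  rw [map_neg, coeff_embS, coeff_embS, map_neg]
  ring

lemma emb0_one : emb0 1 = 1 := by
  classical
  ext d
  rw [coeff_emb0, MvPowerSeries.coeff_one, PowerSeries.coeff_one]
  by_cases hd : d = 0
  · subst hd; simp
  · rw [if_neg hd]
    by_cases h1 : d 1 = 0
    · rw [if_pos h1, if_neg]
      intro h0
      exact hd (by rw [← fs_eta d, h0, h1]; ext i; match i with
        | 0 => rw [fs_apply0]; rfl
        | 1 => rw [fs_apply1]; rfl)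
    · rw [if_neg h1]

lemma emb1_one : emb1 1 = 1 := by
  classical
  ext d
  rw [coeff_emb1, MvPowerSeries.coeff_one, PowerSeries.coeff_one]
  by_cases hd : d = 0
  · subst hd; simp
  · rw [if_neg hd]
    by_cases h1 : d 0 = 0
    · rw [if_pos h1, if_neg]
      intro h0
      exact hd (by rw [← fs_eta d, h0, h1]; ext i; match i with
        | 0 => rw [fs_apply0]; rfl
        | 1 => rw [fs_apply1]; rfl)
    · rw [if_neg h1]

lemma embS_one : embS 1 = 1 := by
  classical
  ext d
  rw [coeff_embS, MvPowerSeries.coeff_one, PowerSeries.coeff_one]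
  by_cases hd : d = 0
  · subst hd; simp
  · rw [if_neg hd, if_neg, mul_zero]
    intro h
    refine hd ?_
    have h0 : d 0 = 0 := by omega
    have h1 : d 1 = 0 := by omega
    rw [← fs_eta d, h0, h1]
    ext i
    match i with
    | 0 => rw [fs_apply0]; rfl
    | 1 => rw [fs_apply1]; rfl

lemma emb0_X : emb0 PowerSeries.X = MvPowerSeries.X 0 := by
  classical
  ext d
  rw [coeff_emb0, MvPowerSeries.coeff_X, PowerSeries.coeff_X]
  by_cases h1 : d 1 = 0
  · rw [if_pos h1]
    by_cases h0 : d 0 = 1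
    · rw [if_pos h0, if_pos]
      rw [← fs_eta d, h0, h1]
      ext i
      match i with
      | 0 => simp [fs_apply0, Finsupp.single_apply]
      | 1 => simp [fs_apply1, Finsupp.single_apply]
    · rw [if_neg h0, if_neg]
      intro hc
      apply h0
      rw [hc]
      simp [Finsupp.single_apply]
  · rw [if_neg h1, if_neg]
    intro hc
    apply h1
    rw [hc]
    simp [Finsupp.single_apply]

lemma emb1_X : emb1 PowerSeries.X = MvPowerSeries.X 1 := by
  classical
  ext d
  rw [coeff_emb1, MvPowerSeries.coeff_X, PowerSeries.coeff_X]
  by_cases h1 : d 0 = 0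
  · rw [if_pos h1]
    by_cases h0 : d 1 = 1
    · rw [if_pos h0, if_pos]
      rw [← fs_eta d, h0, h1]
      ext i
      match i with
      | 0 => simp [fs_apply0, Finsupp.single_apply]
      | 1 => simp [fs_apply1, Finsupp.single_apply]
    · rw [if_neg h0, if_neg]
      intro hc
      apply h0
      rw [hc]
      simp [Finsupp.single_apply]
  · rw [if_neg h1, if_neg]
    intro hc
    apply h1
    rw [hc]
    simp [Finsupp.single_apply]

lemma fs_single0 (a : ℕ) : fs a 0 = Finsupp.single 0 a := by simp [fs]

lemma fs_single1 (b : ℕ) : fs 0 b = Finsupp.single 1 b := by simp [fs]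

lemma eq_single0_iff {d : Fin 2 →₀ ℕ} {a : ℕ} :
    d = Finsupp.single 0 a ↔ d 0 = a ∧ d 1 = 0 := by
  constructor
  · rintro rfl
    constructor <;> simp [Finsupp.single_apply]
  · rintro ⟨h0, h1⟩
    rw [← fs_single0, ← fs_eta d, h0, h1]

lemma eq_single1_iff {d : Fin 2 →₀ ℕ} {a : ℕ} :
    d = Finsupp.single 1 a ↔ d 1 = a ∧ d 0 = 0 := by
  constructor
  · rintro rfl
    constructor <;> simp [Finsupp.single_apply]
  · rintro ⟨h1, h0⟩
    rw [← fs_single1, ← fs_eta d, h0, h1]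

lemma embS_X : embS PowerSeries.X = MvPowerSeries.X 0 + MvPowerSeries.X 1 := by
  classical
  ext d
  rw [coeff_embS, map_add, MvPowerSeries.coeff_X, MvPowerSeries.coeff_X, PowerSeries.coeff_X]
  by_cases h : d 0 + d 1 = 1
  · rw [if_pos h, mul_one]
    by_cases h0 : d 0 = 1
    · have h1 : d 1 = 0 := by omega
      rw [if_pos (eq_single0_iff.mpr ⟨h0, h1⟩), if_neg, h, h0]
      · norm_num
      · rw [eq_single1_iff]; omega
    · have h0' : d 0 = 0 := by omega
      have h1 : d 1 = 1 := by omega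
      rw [if_neg, if_pos (eq_single1_iff.mpr ⟨h1, h0'⟩), h, h0']
      · norm_num
      · rw [eq_single0_iff]; omega
  · rw [if_neg h, mul_zero, if_neg, if_neg]
    · norm_num
    · rw [eq_single1_iff]; omega
    · rw [eq_single0_iff]; omega


lemma emb0_mul (p q : PowerSeries ℚ) : emb0 (p * q) = emb0 p * emb0 q := by
  classical
  ext d
  rw [MvPowerSeries.coeff_mul, coeff_emb0]
  rw [sum_AD d (fun r => MvPowerSeries.coeff r.1 (emb0 p) * MvPowerSeries.coeff r.2 (emb0 q))]
  rw [Finset.sum_product]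
  by_cases hd : d 1 = 0
  · rw [if_pos hd, hd, Finset.Nat.antidiagonal_zero, PowerSeries.coeff_mul]
    refine Finset.sum_congr rfl fun ij _ => ?_
    rw [Finset.sum_singleton, coeff_emb0, coeff_emb0, fs_apply0, fs_apply1, fs_apply0, fs_apply1,
      if_pos rfl, if_pos rfl]
  · rw [if_neg hd]
    symm
    refine Finset.sum_eq_zero fun ij _ => Finset.sum_eq_zero fun kl hkl => ?_
    rw [Finset.HasAntidiagonal.mem_antidiagonal] at hkl
    rw [coeff_emb0, coeff_emb0, fs_apply1, fs_apply1]
    by_cases h1 : kl.1 = 0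
    · rw [if_neg (show ¬(kl.2 = 0) by omega)]
      ring
    · rw [if_neg h1]
      ring

lemma emb1_mul (p q : PowerSeries ℚ) : emb1 (p * q) = emb1 p * emb1 q := by
  classical
  ext d
  rw [MvPowerSeries.coeff_mul, coeff_emb1]
  rw [sum_AD d (fun r => MvPowerSeries.coeff r.1 (emb1 p) * MvPowerSeries.coeff r.2 (emb1 q))]
  rw [Finset.sum_product]
  by_cases hd : d 0 = 0
  · rw [if_pos hd, hd, Finset.Nat.antidiagonal_zero]
    rw [Finset.sum_singleton, PowerSeries.coeff_mul]
    refine Finset.sum_congr rfl fun kl _ => ?_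
    rw [coeff_emb1, coeff_emb1, fs_apply0, fs_apply1, fs_apply0, fs_apply1,
      if_pos rfl, if_pos rfl]
  · rw [if_neg hd]
    symm
    refine Finset.sum_eq_zero fun ij hij => Finset.sum_eq_zero fun kl _ => ?_
    rw [Finset.HasAntidiagonal.mem_antidiagonal] at hij
    rw [coeff_emb1, coeff_emb1, fs_apply0, fs_apply0]
    by_cases h1 : ij.1 = 0
    · rw [if_neg (show ¬(ij.2 = 0) by omega)]
      ring
    · rw [if_neg h1]
      ring

lemma embS_mul (p q : PowerSeries ℚ) : embS (p * q) = embS p * embS q := by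
  classical
  ext d
  have hR : MvPowerSeries.coeff d (embS p * embS q)
      = ∑ ij ∈ Finset.HasAntidiagonal.antidiagonal (d 0), ∑ kl ∈ Finset.HasAntidiagonal.antidiagonal (d 1),
          (((ij.1 + kl.1).choose ij.1 : ℚ) * PowerSeries.coeff (ij.1 + kl.1) p) *
          (((ij.2 + kl.2).choose ij.2 : ℚ) * PowerSeries.coeff (ij.2 + kl.2) q) := by
    rw [MvPowerSeries.coeff_mul]
    rw [sum_AD d (fun r => MvPowerSeries.coeff r.1 (embS p) * MvPowerSeries.coeff r.2 (embS q))]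
    rw [Finset.sum_product]
    refine Finset.sum_congr rfl fun ij _ => Finset.sum_congr rfl fun kl _ => ?_
    rw [coeff_embS, coeff_embS, fs_apply0, fs_apply1, fs_apply0, fs_apply1]
  rw [hR, coeff_embS, PowerSeries.coeff_mul, Finset.mul_sum]
  set n := d 0 + d 1 with hn
  have inner : ∀ ij ∈ Finset.HasAntidiagonal.antidiagonal (d 0),
      (∑ kl ∈ Finset.HasAntidiagonal.antidiagonal (d 1),
        (((ij.1 + kl.1).choose ij.1 : ℚ) * PowerSeries.coeff (ij.1 + kl.1) p) *
        (((ij.2 + kl.2).choose ij.2 : ℚ) * PowerSeries.coeff (ij.2 + kl.2) q))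
      = ∑ uv ∈ Finset.HasAntidiagonal.antidiagonal n,
          ((uv.1.choose ij.1 : ℚ) * (uv.2.choose ij.2 : ℚ)) *
            (PowerSeries.coeff uv.1 p * PowerSeries.coeff uv.2 q) := by
    intro ij hij
    rw [Finset.HasAntidiagonal.mem_antidiagonal] at hij
    have h1 : (∑ kl ∈ Finset.HasAntidiagonal.antidiagonal (d 1),
        (((ij.1 + kl.1).choose ij.1 : ℚ) * PowerSeries.coeff (ij.1 + kl.1) p) *
        (((ij.2 + kl.2).choose ij.2 : ℚ) * PowerSeries.coeff (ij.2 + kl.2) q))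
        = ∑ uv ∈ (Finset.HasAntidiagonal.antidiagonal n).filter (fun uv => ij.1 ≤ uv.1 ∧ ij.2 ≤ uv.2),
          ((uv.1.choose ij.1 : ℚ) * (uv.2.choose ij.2 : ℚ)) *
            (PowerSeries.coeff uv.1 p * PowerSeries.coeff uv.2 q) := by
      refine Finset.sum_nbij' (i := fun kl => (ij.1 + kl.1, ij.2 + kl.2))
        (j := fun uv => (uv.1 - ij.1, uv.2 - ij.2)) ?_ ?_ ?_ ?_ ?_
      · intro kl hkl
        rw [Finset.HasAntidiagonal.mem_antidiagonal] at hkl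
        rw [Finset.mem_filter, Finset.HasAntidiagonal.mem_antidiagonal]
        dsimp only
        refine ⟨by omega, by omega, by omega⟩
      · intro uv huv
        rw [Finset.mem_filter, Finset.HasAntidiagonal.mem_antidiagonal] at huv
        rw [Finset.HasAntidiagonal.mem_antidiagonal]
        dsimp only
        omega
      · intro kl _
        refine Prod.ext ?_ ?_ <;> (dsimp only; omega)
      · intro uv huv
        rw [Finset.mem_filter, Finset.HasAntidiagonal.mem_antidiagonal] at huv
        refine Prod.ext ?_ ?_ <;> (dsimp only; omega)
      · intro kl _
        dsimp only
        ring
    rw [h1]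
    refine Finset.sum_subset (Finset.filter_subset _ _) fun uv huv hnuv => ?_
    rw [Finset.mem_filter] at hnuv
    have : ¬(ij.1 ≤ uv.1 ∧ ij.2 ≤ uv.2) := fun hc => hnuv ⟨huv, hc⟩
    by_cases hcase : ij.1 ≤ uv.1
    · have h2 : uv.2 < ij.2 := by omega
      rw [Nat.choose_eq_zero_of_lt h2]
      push_cast
      ring
    · rw [Nat.choose_eq_zero_of_lt (by omega)]
      push_cast
      ring
  rw [Finset.sum_congr rfl inner, Finset.sum_comm]
  refine Finset.sum_congr rfl fun uv huv => ?_
  rw [Finset.HasAntidiagonal.mem_antidiagonal] at huv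
  rw [← Finset.sum_mul]
  congr 1
  have hv : ((n).choose (d 0) : ℚ) = ((uv.1 + uv.2).choose (d 0) : ℚ) := by rw [huv]
  rw [hv, Nat.add_choose_eq]
  push_cast
  rfl

lemma emb0_mem_S {p : PowerSeries ℚ} (hp : ∀ m, PowerSeries.coeff m p ∈ SR) :
    emb0 p ∈ S := by
  intro d
  rw [coeff_emb0]
  split
  · exact hp _
  · exact zero_mem _

lemma emb1_mem_S {p : PowerSeries ℚ} (hp : ∀ m, PowerSeries.coeff m p ∈ SR) :
    emb1 p ∈ S := by
  intro d
  rw [coeff_emb1]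
  split
  · exact hp _
  · exact zero_mem _

lemma embS_mem_S {p : PowerSeries ℚ} (hp : ∀ m, PowerSeries.coeff m p ∈ SR) :
    embS p ∈ S := by
  intro d
  rw [coeff_embS]
  exact mul_mem (by exact ⟨((d 0 + d 1).choose (d 0) : ℤ), by push_cast; rfl⟩) (hp _)



/-! ### the `mod 2` Lucas-type congruence -/

lemma half2 {φ : QQ} (h : ∀ d, ∃ k : ℤ, MvPowerSeries.coeff d φ = 2 * (k : ℚ)) :
    ∃ u ∈ S, φ = 2 * u := by
  refine ⟨(2⁻¹ : ℚ) • φ, fun d => ?_, ?_⟩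
  · obtain ⟨k, hk⟩ := h d
    rw [LinearMap.map_smul, hk]
    refine ⟨k, ?_⟩
    have : (Int.castRingHom ℚ) k = (k : ℚ) := rfl
    rw [this, smul_eq_mul]
    ring
  · have h2 : (2 : QQ) = algebraMap ℚ QQ 2 := (map_ofNat _ 2).symm
    rw [Algebra.smul_def, h2, ← mul_assoc, ← map_mul]
    norm_num

lemma coeff_X0_mul (φ : QQ) (d : Fin 2 →₀ ℕ) :
    MvPowerSeries.coeff d (MvPowerSeries.X 0 * φ)
      = if 1 ≤ d 0 then MvPowerSeries.coeff (fs (d 0 - 1) (d 1)) φ else 0 := by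
  classical
  rw [MvPowerSeries.X_def, MvPowerSeries.coeff_monomial_mul]
  by_cases h : 1 ≤ d 0
  · rw [if_pos (Finsupp.single_le_iff.mpr h), if_pos h, one_mul]
    have hsub : d - Finsupp.single 0 1 = fs (d 0 - 1) (d 1) := by
      ext i
      match i with
      | 0 => rw [Finsupp.tsub_apply, fs_apply0, Finsupp.single_eq_same]
      | 1 =>
        rw [Finsupp.tsub_apply, fs_apply1,
          Finsupp.single_eq_of_ne (show (1 : Fin 2) ≠ 0 by decide), tsub_zero]
    rw [hsub]
  · rw [if_neg (fun hc => h (Finsupp.single_le_iff.mp hc)), if_neg h]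

lemma coeff_X1_mul (φ : QQ) (d : Fin 2 →₀ ℕ) :
    MvPowerSeries.coeff d (MvPowerSeries.X 1 * φ)
      = if 1 ≤ d 1 then MvPowerSeries.coeff (fs (d 0) (d 1 - 1)) φ else 0 := by
  classical
  rw [MvPowerSeries.X_def, MvPowerSeries.coeff_monomial_mul]
  by_cases h : 1 ≤ d 1
  · rw [if_pos (Finsupp.single_le_iff.mpr h), if_pos h, one_mul]
    have hsub : d - Finsupp.single 1 1 = fs (d 0) (d 1 - 1) := by
      ext i
      match i with
      | 0 =>
        rw [Finsupp.tsub_apply, fs_apply0,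
          Finsupp.single_eq_of_ne (show (0 : Fin 2) ≠ 1 by decide), tsub_zero]
      | 1 => rw [Finsupp.tsub_apply, fs_apply1, Finsupp.single_eq_same]
    rw [hsub]
  · rw [if_neg (fun hc => h (Finsupp.single_le_iff.mp hc)), if_neg h]

lemma hP2 : ∃ T2 ∈ S,
    (MvPowerSeries.X 0 + MvPowerSeries.X 1) * embS fSeriesQ'
      - MvPowerSeries.X 0 * emb0 fSeriesQ' - MvPowerSeries.X 1 * emb1 fSeriesQ' = 2 * T2 := by
  apply half2
  intro d
  classical
  rw [map_sub, map_sub, add_mul, map_add]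
  rw [coeff_X0_mul, coeff_X1_mul, coeff_X0_mul, coeff_X1_mul]
  by_cases h0 : 1 ≤ d 0
  · by_cases h1 : 1 ≤ d 1
    · -- interior case
      rw [if_pos h0, if_pos h1, if_pos h0, if_pos h1]
      rw [coeff_embS, coeff_embS, coeff_emb0, coeff_emb1]
      simp only [fs_apply0, fs_apply1]
      rw [if_neg (by omega), if_neg (by omega)]
      rw [coeff_fQ, coeff_fQ]
      set m := d 0 + d 1 - 1 with hm
      have e1 : d 0 - 1 + d 1 = m := by omega
      have e2 : d 0 + (d 1 - 1) = m := by omega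
      rw [e1, e2]
      have pascal : (m.choose (d 0 - 1) : ℚ) + (m.choose (d 0) : ℚ) = ((m+1).choose (d 0) : ℚ) := by
        have hd0 : d 0 = (d 0 - 1) + 1 := by omega
        rw [hd0, Nat.choose_succ_succ' m (d 0 - 1)]
        push_cast
        ring
      by_cases hc : ∃ t : ℕ, m + 1 = 2 ^ t
      · obtain ⟨t, ht⟩ := hc
        have hcz : cz m = 1 := by unfold cz; rw [if_pos ⟨t, ht⟩]
        have hdvd : (2 : ℕ) ∣ (m+1).choose (d 0) := by
          rw [ht]
          exact Nat.Prime.dvd_choose_pow Nat.prime_two (by omega) (by omega)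
        obtain ⟨k, hk⟩ := hdvd
        refine ⟨(k : ℤ), ?_⟩
        rw [hcz]
        have : ((m+1).choose (d 0) : ℚ) = 2 * (k : ℚ) := by exact_mod_cast congrArg (Nat.cast : ℕ → ℚ) hk
        push_cast
        linear_combination this + pascal
      · have hcz : cz m = 0 := by unfold cz; rw [if_neg hc]
        refine ⟨0, ?_⟩
        rw [hcz]
        push_cast
        ring
    · -- d 1 = 0
      rw [if_pos h0, if_neg h1, if_pos h0, if_neg h1]
      rw [coeff_embS, coeff_emb0]
      simp only [fs_apply0, fs_apply1]
      have hz : d 1 = 0 := by omega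
      rw [hz, if_pos rfl]
      refine ⟨0, ?_⟩
      rw [Nat.add_zero, Nat.choose_self]
      push_cast
      ring
  · by_cases h1 : 1 ≤ d 1
    · -- d 0 = 0
      rw [if_neg h0, if_pos h1, if_neg h0, if_pos h1]
      rw [coeff_embS, coeff_emb1]
      simp only [fs_apply0, fs_apply1]
      have hz : d 0 = 0 := by omega
      rw [hz, if_pos rfl]
      refine ⟨0, ?_⟩
      rw [Nat.zero_add, Nat.choose_zero_right]
      push_cast
      ring
    · rw [if_neg h0, if_neg h1, if_neg h0, if_neg h1]
      exact ⟨0, by push_cast; ring⟩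


lemma emb0_sub (p q : PowerSeries ℚ) : emb0 (p - q) = emb0 p - emb0 q := by
  rw [sub_eq_add_neg, emb0_add, emb0_neg, ← sub_eq_add_neg]

lemma emb1_sub (p q : PowerSeries ℚ) : emb1 (p - q) = emb1 p - emb1 q := by
  rw [sub_eq_add_neg, emb1_add, emb1_neg, ← sub_eq_add_neg]

lemma embS_sub (p q : PowerSeries ℚ) : embS (p - q) = embS p - embS q := by
  rw [sub_eq_add_neg, embS_add, embS_neg, ← sub_eq_add_neg]

lemma rescale_fQ : PowerSeries.rescale (-1 : ℚ) fSeriesQ' = 2 - fSeriesQ' := by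
  ext m
  rw [PowerSeries.coeff_rescale, map_sub, coeff_fQ]
  have h2 : (PowerSeries.coeff m) (2 : PowerSeries ℚ)
      = if m = 0 then (2:ℚ) else 0 := by
    have : (2 : PowerSeries ℚ) = PowerSeries.C 2 := (map_ofNat _ 2).symm
    rw [this, PowerSeries.coeff_C]
  rw [h2]
  rcases Nat.even_or_odd m with he | ho
  · by_cases h0 : m = 0
    · subst h0
      rw [if_pos rfl, cz0]
      norm_num
    · rw [if_neg h0, cz_even (Nat.even_iff.mp he) h0]
      have : ((-1 : ℚ)) ^ m = 1 := he.neg_one_pow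
      rw [this]
      norm_num
  · have h0 : m ≠ 0 := by
      intro h; rw [h] at ho; simp [Nat.odd_iff] at ho
    rw [if_neg h0]
    have : ((-1 : ℚ)) ^ m = -1 := ho.neg_one_pow
    rw [this]
    ring

lemma X0_mem_S : MvPowerSeries.X (0 : Fin 2) ∈ S := by
  intro d
  classical
  rw [MvPowerSeries.coeff_X]
  split
  · exact one_mem _
  · exact zero_mem _

lemma X1_mem_S : MvPowerSeries.X (1 : Fin 2) ∈ S := by
  intro d
  classical
  rw [MvPowerSeries.coeff_X]
  split
  · exact one_mem _
  · exact zero_mem _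

lemma two_mem_S : (2 : QQ) ∈ S := by
  have h : (2 : QQ) = 1 + 1 := by norm_num
  rw [h]
  exact add_mem (one_mem S) (one_mem S)

end St12aux


/-- `f(x) = ∑_{n ≥ 0} x^(2^n - 1)`, with rational coefficients. -/
noncomputable def fSeriesQ : PowerSeries ℚ := by
  classical
  exact PowerSeries.mk fun m => if ∃ n : ℕ, m + 1 = 2 ^ n then 1 else 0

lemma fQ_eq : fSeriesQ = fSeriesQ' := by
  ext m
  unfold fSeriesQ fSeriesQ'
  by_cases h : ∃ n : ℕ, m + 1 = 2 ^ n <;> simp [h]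

/-- Let `g` be the unique power series with constant term `1` (with
coefficients in `ℤ[1/2] ⊆ ℚ`) satisfying `g(x)² = f(x)·f(-x)`.  Then
`δg(x,y) = g(x+y)/(g(x)g(y))` has all coefficients in `ℤ`.  Here `Gx`, `Gy`, `Gxy` are
`g(x)`, `g(y)` and `g(x+y)` as two-variable power series (`g(x+y)` expanded by the binomial
theorem), and `D = δg(x,y)` is characterized by `D·(g(x)g(y)) = g(x+y)`. -/
theorem statement12 (g : PowerSeries ℚ)
    (hg1 : PowerSeries.constantCoeff g = 1)
    (hg2 : g ^ 2 = fSeriesQ * PowerSeries.rescale (-1 : ℚ) fSeriesQ)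
    (Gx Gy Gxy : MvPowerSeries (Fin 2) ℚ)
    (hGx : ∀ d : Fin 2 →₀ ℕ,
      MvPowerSeries.coeff d Gx = if d 1 = 0 then PowerSeries.coeff (d 0) g else 0)
    (hGy : ∀ d : Fin 2 →₀ ℕ,
      MvPowerSeries.coeff d Gy = if d 0 = 0 then PowerSeries.coeff (d 1) g else 0)
    (hGxy : ∀ d : Fin 2 →₀ ℕ,
      MvPowerSeries.coeff d Gxy
        = ((d 0 + d 1).choose (d 0) : ℚ) * PowerSeries.coeff (d 0 + d 1) g)
    (D : MvPowerSeries (Fin 2) ℚ)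
    (hD : D * (Gx * Gy) = Gxy) :
    ∀ d : Fin 2 →₀ ℕ, ∃ n : ℤ, MvPowerSeries.coeff d D = (n : ℚ) := by
  classical
  have hfc : ∀ m, PowerSeries.coeff m fSeriesQ' ∈ SR := fun m => by
    rw [coeff_fQ]; exact ⟨cz m, rfl⟩
  -- identification of the two-variable series with embeddings
  have hGxE : Gx = emb0 g := MvPowerSeries.ext fun d => by rw [hGx d, coeff_emb0]
  have hGyE : Gy = emb1 g := MvPowerSeries.ext fun d => by rw [hGy d, coeff_emb1]
  have hGxyE : Gxy = embS g := MvPowerSeries.ext fun d => by rw [hGxy d, coeff_embS]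
  -- the square identity in one variable
  have hg2'' : g * g = fSeriesQ' + fSeriesQ' - fSeriesQ' * fSeriesQ' := by
    rw [fQ_eq, rescale_fQ] at hg2
    linear_combination hg2
  -- two-variable square identities
  have hGx2 : Gx * Gx = emb0 fSeriesQ' + emb0 fSeriesQ' - emb0 fSeriesQ' * emb0 fSeriesQ' := by
    rw [hGxE]
    have h3 := congrArg emb0 hg2''
    simp only [emb0_sub, emb0_add, emb0_mul] at h3
    exact h3
  have hGy2 : Gy * Gy = emb1 fSeriesQ' + emb1 fSeriesQ' - emb1 fSeriesQ' * emb1 fSeriesQ' := by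
    rw [hGyE]
    have h3 := congrArg emb1 hg2''
    simp only [emb1_sub, emb1_add, emb1_mul] at h3
    exact h3
  have hGxy2 : Gxy * Gxy = embS fSeriesQ' + embS fSeriesQ' - embS fSeriesQ' * embS fSeriesQ' := by
    rw [hGxyE]
    have h3 := congrArg embS hg2''
    simp only [embS_sub, embS_add, embS_mul] at h3
    exact h3
  -- memberships
  have hFxS : emb0 fSeriesQ' ∈ S := emb0_mem_S hfc
  have hFyS : emb1 fSeriesQ' ∈ S := emb1_mem_S hfc
  have hFxyS : embS fSeriesQ' ∈ S := embS_mem_S hfc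
  -- constant coefficients
  have hcc : ∀ φ : QQ, MvPowerSeries.constantCoeff φ
      = MvPowerSeries.coeff (0 : Fin 2 →₀ ℕ) φ :=
    fun φ => (MvPowerSeries.coeff_zero_eq_constantCoeff_apply φ).symm
  have hzero0 : ((0 : Fin 2 →₀ ℕ) : Fin 2 → ℕ) 0 = 0 := rfl
  have hzero1 : ((0 : Fin 2 →₀ ℕ) : Fin 2 → ℕ) 1 = 0 := rfl
  have hf0 : PowerSeries.coeff 0 fSeriesQ' = 1 := by
    rw [coeff_fQ, cz0]; norm_num
  have ccFx : MvPowerSeries.constantCoeff (emb0 fSeriesQ') = 1 := by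
    rw [hcc, coeff_emb0, hzero1, if_pos rfl, hzero0, hf0]
  have ccFy : MvPowerSeries.constantCoeff (emb1 fSeriesQ') = 1 := by
    rw [hcc, coeff_emb1, hzero0, if_pos rfl, hzero1, hf0]
  have ccFxy : MvPowerSeries.constantCoeff (embS fSeriesQ') = 1 := by
    rw [hcc, coeff_embS, hzero0, hzero1, hf0]
    norm_num
  have cc2 : MvPowerSeries.constantCoeff (2 : QQ) = 2 := map_ofNat _ 2
  -- inverses
  obtain ⟨Bx, hBxS, hBx⟩ := invS hFxS ccFx
  obtain ⟨By, hByS, hBy⟩ := invS hFyS ccFy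
  obtain ⟨Bxy, hBxyS, hBxy⟩ := invS hFxyS ccFxy
  obtain ⟨Cx, hCxS, hCx⟩ := invS (sub_mem two_mem_S hFxS)
    (by rw [map_sub, cc2, ccFx]; norm_num)
  obtain ⟨Cy, hCyS, hCy⟩ := invS (sub_mem two_mem_S hFyS)
    (by rw [map_sub, cc2, ccFy]; norm_num)
  -- mod-2 congruences
  obtain ⟨u₁, hu₁, hOne'⟩ := hOne
  have hOne'' : fSeriesQ' * (1 + PowerSeries.X * fSeriesQ') = 1 + (u₁ + u₁) := by
    linear_combination hOne'
  have hUx : emb0 fSeriesQ' * (1 + MvPowerSeries.X 0 * emb0 fSeriesQ')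
      = 1 + (emb0 u₁ + emb0 u₁) := by
    have h3 := congrArg emb0 hOne''
    simp only [emb0_mul, emb0_add, emb0_one, emb0_X] at h3
    exact h3
  have hUy : emb1 fSeriesQ' * (1 + MvPowerSeries.X 1 * emb1 fSeriesQ')
      = 1 + (emb1 u₁ + emb1 u₁) := by
    have h3 := congrArg emb1 hOne''
    simp only [emb1_mul, emb1_add, emb1_one, emb1_X] at h3
    exact h3
  have hUxy : embS fSeriesQ' * (1 + (MvPowerSeries.X 0 + MvPowerSeries.X 1) * embS fSeriesQ')
      = 1 + (embS u₁ + embS u₁) := by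
    have h3 := congrArg embS hOne''
    simp only [embS_mul, embS_add, embS_one, embS_X] at h3
    exact h3
  obtain ⟨T2, hT2S, hP2'⟩ := hP2
  -- the series W with Bx + By + Bxy - 1 = 2 W
  set W : QQ := 1 + MvPowerSeries.X 0 * emb0 fSeriesQ' + MvPowerSeries.X 1 * emb1 fSeriesQ'
      + T2 - emb0 u₁ * Bx - emb1 u₁ * By - embS u₁ * Bxy with hWdef
  have hWS : W ∈ S := by
    rw [hWdef]
    refine sub_mem (sub_mem (sub_mem (add_mem (add_mem (add_mem (one_mem S) ?_) ?_) hT2S) ?_) ?_) ?_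
    · exact mul_mem X0_mem_S hFxS
    · exact mul_mem X1_mem_S hFyS
    · exact mul_mem (emb0_mem_S hu₁) hBxS
    · exact mul_mem (emb1_mem_S hu₁) hByS
    · exact mul_mem (embS_mem_S hu₁) hBxyS
  have hW : Bx + By + Bxy - 1 = 2 * W := by
    rw [hWdef]
    linear_combination (-Bx)*hUx - By*hUy - Bxy*hUxy
      + (1 + MvPowerSeries.X 0 * emb0 fSeriesQ')*hBx
      + (1 + MvPowerSeries.X 1 * emb1 fSeriesQ')*hBy
      + (1 + (MvPowerSeries.X 0 + MvPowerSeries.X 1) * embS fSeriesQ')*hBxy + hP2'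
  -- main square computation
  have h1 : D*D*((emb0 fSeriesQ' + emb0 fSeriesQ' - emb0 fSeriesQ' * emb0 fSeriesQ')
        * (emb1 fSeriesQ' + emb1 fSeriesQ' - emb1 fSeriesQ' * emb1 fSeriesQ'))
      = embS fSeriesQ' + embS fSeriesQ' - embS fSeriesQ' * embS fSeriesQ' := by
    rw [← hGx2, ← hGy2, ← hGxy2]
    linear_combination (D*(Gx*Gy)+Gxy)*hD
  set Fx := emb0 fSeriesQ'
  set Fy := emb1 fSeriesQ'
  set Fxy := embS fSeriesQ'
  set τ : QQ := Bxy*Cx*Cy*(Fx*Fy*Fxy*W - Fxy) with hτdef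
  have hτS : τ ∈ S := by
    rw [hτdef]
    exact mul_mem (mul_mem (mul_mem hBxyS hCxS) hCyS)
      (sub_mem (mul_mem (mul_mem (mul_mem hFxS hFyS) hFxyS) hWS) hFxyS)
  have hσ2 : (D*(Fx*Fy*Bxy))^2 = 1 + 4*τ := by
    rw [hτdef]
    linear_combination (Fx*Fy*Cx*Cy*Bxy*Bxy)*h1
      + (-(D*D*Fx*Fx*Fy*Fy*Bxy*Bxy*(2-Fy)*Cy) + (2-Fy)*Cy)*hCx
      + (-(D*D*Fx*Fx*Fy*Fy*Bxy*Bxy) + 1)*hCy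
      + ((2-Fxy)*Bxy*Fx*Fy*Cx*Cy + (2-Fx)*Cx*(2-Fy)*Cy - 2*Bxy*Cx*Cy*Fx*Fy)*hBxy
      + (-(2*Bxy*Cx*Cy*Fxy*Fy))*hBx
      + (-(2*Bxy*Cx*Cy*Fxy*Fx))*hBy
      + (2*Fx*Fy*Fxy*Bxy*Cx*Cy)*hW
  -- constant coefficient of D
  have ccGx : MvPowerSeries.constantCoeff Gx = 1 := by
    rw [hcc, hGx 0, hzero1, if_pos rfl, hzero0,
      PowerSeries.coeff_zero_eq_constantCoeff_apply, hg1]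
  have ccGy : MvPowerSeries.constantCoeff Gy = 1 := by
    rw [hcc, hGy 0, hzero0, if_pos rfl, hzero1,
      PowerSeries.coeff_zero_eq_constantCoeff_apply, hg1]
  have ccGxy : MvPowerSeries.constantCoeff Gxy = 1 := by
    rw [hcc, hGxy 0, hzero0, hzero1, PowerSeries.coeff_zero_eq_constantCoeff_apply, hg1]
    norm_num
  have ccD : MvPowerSeries.constantCoeff D = 1 := by
    have h := congrArg (MvPowerSeries.constantCoeff) hD
    rw [map_mul, map_mul, ccGx, ccGy, ccGxy] at h
    simpa using h
  have ccBxy : MvPowerSeries.constantCoeff Bxy = 1 := by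
    have h := congrArg (MvPowerSeries.constantCoeff) hBxy
    rw [map_mul, ccFxy, map_one, one_mul] at h
    exact h
  have ccσ : MvPowerSeries.constantCoeff (D*(Fx*Fy*Bxy)) = 1 := by
    rw [map_mul, map_mul, map_mul, ccD, ccFx, ccFy, ccBxy]
    norm_num
  have hσS : D*(Fx*Fy*Bxy) ∈ S := sqrtS hτS hσ2 ccσ
  have hDeq : D = (D*(Fx*Fy*Bxy))*(Fxy*(Bx*By)) := by
    linear_combination (-(D*Fy*By*Fxy*Bxy))*hBx - (D*Fxy*Bxy)*hBy - D*hBxy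
  have hDS : D ∈ S := by
    rw [hDeq]
    exact mul_mem hσS (mul_mem hFxyS (mul_mem hBxS hByS))
  exact fun d => mem_S_iff.mp hDS d
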